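/- 2-switching ratio upper bound: if M ⊆ K_n, uv ∉ M, and f := 1 - (D(d_u + m_u) + D(d_v + m_v))/(2m(G)) > 0, then |G_d(uv, M)| / |G_d(∅, M + uv)| ≤ (d_u·d_v / (2m(G))) · (1/f), where G_d(X,Y) is the set of graphs with degree sequence d containing X and avoiding Y (both sets assumed nonempty), m(G) = (1/2)·sum of d, m_w is the degree of w in M, and D(k) is the sum of the k largest entries of d. -/

import Mathlib

open Finset SimpleGraph

/-- The graphs with degree sequence `d` containing `X` and avoiding `Y`. -/
def Gset {V : Type*} [Fintype V] [DecidableEq V] (d : V → ℕ) (X Y : SimpleGraph V) :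
    Set (SimpleGraph V) :=
  {G | (∀ v, (G.neighborSet v).ncard = d v) ∧ X ≤ G ∧ Disjoint G Y}

/-- The graph consisting of the single edge `uv`. -/
def edgeGraph {V : Type*} (u v : V) : SimpleGraph V :=
  SimpleGraph.fromEdgeSet {s(u, v)}

/-- Sum of the `k` largest entries of `d`. -/
def Dsum {V : Type*} [Fintype V] (d : V → ℕ) (k : ℕ) : ℕ :=
  (Finset.univ.powerset.filter (fun S => S.card ≤ k)).sup (fun S => ∑ w ∈ S, d w)

set_option linter.unusedSectionVars false

lemma edgeGraph_adj {V : Type*} {u v a b : V} :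
    (edgeGraph u v).Adj a b ↔ s(a,b) = s(u,v) ∧ a ≠ b := by
  simp [edgeGraph]

lemma edgeGraph_le {V : Type*} {u v : V} (h : u ≠ v) (G : SimpleGraph V) :
    edgeGraph u v ≤ G ↔ G.Adj u v := by
  constructor
  · intro hle; exact hle (edgeGraph_adj.mpr ⟨rfl, h⟩)
  · intro hadj a b hab
    rw [edgeGraph_adj, Sym2.eq_iff] at hab
    rcases hab.1 with ⟨rfl, rfl⟩ | ⟨rfl, rfl⟩
    · exact hadj
    · exact hadj.symm

lemma edgeGraph_edgeSet {V : Type*} {u v : V} (h : u ≠ v) :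
    (edgeGraph u v).edgeSet = {s(u,v)} := by
  ext e
  simp only [edgeGraph, edgeSet_fromEdgeSet, Set.mem_diff, Set.mem_singleton_iff,
    Set.mem_setOf_eq]
  constructor
  · exact fun he => he.1
  · rintro rfl; exact ⟨rfl, by simp [h]⟩

lemma sum_le_Dsum {V : Type*} [Fintype V] (d : V → ℕ) {S : Finset V} {k : ℕ}
    (h : S.card ≤ k) : ∑ w ∈ S, d w ≤ Dsum d k := by
  apply Finset.le_sup (f := fun S => ∑ w ∈ S, d w)
  simp [Finset.mem_filter, Finset.mem_powerset, h]

lemma card_biUnion_sigma {α β : Type*} [DecidableEq α] [DecidableEq β]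
    (s : Finset α) (f : α → Finset β) :
    (s.biUnion fun a => {a} ×ˢ f a).card = ∑ a ∈ s, (f a).card := by
  rw [Finset.card_biUnion]
  · simp
  · intro x hx y hy hxy
    simp only [Finset.disjoint_left, Finset.mem_product, Finset.mem_singleton]
    rintro p ⟨rfl, -⟩ ⟨rfl, -⟩
    exact hxy rfl

section Switch
variable {V : Type*} [Fintype V] [DecidableEq V]

/-- validity of the pair (x,y) for forward switching at (u,v) avoiding M -/
def swValid (M : SimpleGraph V) (u v : V) (G : SimpleGraph V) (x y : V) : Prop :=
  G.Adj x y ∧ x ≠ u ∧ ¬G.Adj u x ∧ ¬M.Adj u x ∧ y ≠ v ∧ ¬G.Adj v y ∧ ¬M.Adj v y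

def switched (u v : V) (G : SimpleGraph V) (x y : V) : SimpleGraph V :=
  (G \ (edgeGraph u v ⊔ edgeGraph x y)) ⊔ (edgeGraph u x ⊔ edgeGraph v y)

lemma switched_adj {u v x y a b : V} {G : SimpleGraph V} :
    (switched u v G x y).Adj a b ↔
      ((G.Adj a b ∧ s(a,b) ≠ s(u,v) ∧ s(a,b) ≠ s(x,y)) ∨
        ((s(a,b) = s(u,x) ∨ s(a,b) = s(v,y)) ∧ a ≠ b)) := by
  have hne : G.Adj a b → a ≠ b := Adj.ne
  simp only [switched, sup_adj, sdiff_adj, edgeGraph_adj]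
  tauto

lemma switched_edgeSet {u v x y : V} {G : SimpleGraph V}
    (huv : u ≠ v) (hxy : x ≠ y) (hux : u ≠ x) (hvy : v ≠ y) :
    (switched u v G x y).edgeSet =
      ((G.edgeSet \ ({s(u,v)} ∪ {s(x,y)})) ∪ ({s(u,x)} ∪ {s(v,y)})) := by
  simp only [switched, edgeSet_sup, edgeSet_sdiff, edgeGraph_edgeSet huv,
    edgeGraph_edgeSet hxy, edgeGraph_edgeSet hux, edgeGraph_edgeSet hvy]

lemma set_recover {α : Type*} {A : Set α} {e1 e2 f1 f2 : α}
    (h1 : e1 ∈ A) (h2 : e2 ∈ A) (h3 : f1 ∉ A) (h4 : f2 ∉ A) :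
    ((((A \ ({e1} ∪ {e2})) ∪ ({f1} ∪ {f2})) \ ({f1} ∪ {f2})) ∪ ({e1} ∪ {e2})) = A := by
  ext x
  simp only [Set.mem_union, Set.mem_diff, Set.mem_singleton_iff]
  constructor
  · rintro (⟨(⟨hA', _⟩ | hf), hnf⟩ | (rfl | rfl))
    · exact hA'
    · exact absurd hf hnf
    · exact h1
    · exact h2
  · intro hx
    by_cases hep : x = e1 ∨ x = e2
    · exact Or.inr hep
    · refine Or.inl ⟨Or.inl ⟨hx, hep⟩, ?_⟩
      rintro (rfl | rfl)
      · exact h3 hx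
      · exact h4 hx

/-- distinctness and adjacency facts derived from validity -/
lemma swValid_facts {M G : SimpleGraph V} {u v x y : V}
    (huv : u ≠ v) (hGuv : G.Adj u v) (hval : swValid M u v G x y) :
    G.Adj x y ∧ x ≠ u ∧ x ≠ v ∧ y ≠ u ∧ y ≠ v ∧ x ≠ y ∧
      ¬G.Adj u x ∧ ¬G.Adj v y := by
  obtain ⟨hxy, hxu, hGux, -, hyv, hGvy, -⟩ := hval
  refine ⟨hxy, hxu, ?_, ?_, hyv, hxy.ne, hGux, hGvy⟩
  · rintro rfl; exact hGux hGuv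
  · rintro rfl; exact hGvy hGuv.symm

lemma switched_injective {M G1 G2 : SimpleGraph V} {u v x y : V}
    (huv : u ≠ v) (hGuv1 : G1.Adj u v) (hval1 : swValid M u v G1 x y)
    (hGuv2 : G2.Adj u v) (hval2 : swValid M u v G2 x y)
    (heq : switched u v G1 x y = switched u v G2 x y) : G1 = G2 := by
  obtain ⟨hxy1, hxu, hxv, hyu, hyv, hxyne, hux1, hvy1⟩ := swValid_facts huv hGuv1 hval1
  obtain ⟨hxy2, -, -, -, -, -, hux2, hvy2⟩ := swValid_facts huv hGuv2 hval2
  have key : ∀ G : SimpleGraph V, G.Adj u v → G.Adj x y → ¬G.Adj u x → ¬G.Adj v y →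
      (((switched u v G x y).edgeSet \ ({s(u,x)} ∪ {s(v,y)})) ∪ ({s(u,v)} ∪ {s(x,y)}))
        = G.edgeSet := by
    intro G hGuv hGxy hux hvy
    rw [switched_edgeSet huv hxyne hxu.symm hyv.symm]
    exact set_recover (G.mem_edgeSet.mpr hGuv) (G.mem_edgeSet.mpr hGxy)
      (fun h => hux (G.mem_edgeSet.mp h)) (fun h => hvy (G.mem_edgeSet.mp h))
  have h2' := key G2 hGuv2 hxy2 hux2 hvy2
  rw [← heq] at h2'
  exact SimpleGraph.edgeSet_inj.mp ((key G1 hGuv1 hxy1 hux1 hvy1).symm.trans h2')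

section NbrLemmas
variable {u v x y : V} {G : SimpleGraph V}

lemma switched_nbr_u (huv : u ≠ v) (hxu : x ≠ u) (hxv : x ≠ v) (hyu : y ≠ u) (hyv : y ≠ v)
    (hxy : x ≠ y) (hGuv : G.Adj u v) (hGxy : G.Adj x y) (hux : ¬G.Adj u x) (hvy : ¬G.Adj v y) :
    (switched u v G x y).neighborSet u = insert x (G.neighborSet u \ {v}) := by
  ext a
  simp only [mem_neighborSet, switched_adj, Sym2.eq_iff, Set.mem_insert_iff,
    Set.mem_diff, Set.mem_singleton_iff]
  constructor
  · aesop
  · aesop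

lemma switched_nbr_x (huv : u ≠ v) (hxu : x ≠ u) (hxv : x ≠ v) (hyu : y ≠ u) (hyv : y ≠ v)
    (hxy : x ≠ y) (hGuv : G.Adj u v) (hGxy : G.Adj x y) (hux : ¬G.Adj u x) (hvy : ¬G.Adj v y) :
    (switched u v G x y).neighborSet x = insert u (G.neighborSet x \ {y}) := by
  ext a
  simp only [mem_neighborSet, switched_adj, Sym2.eq_iff, Set.mem_insert_iff,
    Set.mem_diff, Set.mem_singleton_iff]
  constructor
  · aesop
  · aesop

lemma switched_nbr_other (huv : u ≠ v) (hxu : x ≠ u) (hxv : x ≠ v) (hyu : y ≠ u) (hyv : y ≠ v)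
    (hxy : x ≠ y) (hGuv : G.Adj u v) (hGxy : G.Adj x y) (hux : ¬G.Adj u x) (hvy : ¬G.Adj v y)
    {w : V} (hwu : w ≠ u) (hwv : w ≠ v) (hwx : w ≠ x) (hwy : w ≠ y) :
    (switched u v G x y).neighborSet w = G.neighborSet w := by
  ext a
  simp only [mem_neighborSet, switched_adj, Sym2.eq_iff]
  constructor
  · aesop
  · aesop
end NbrLemmas

lemma edgeGraph_comm {V : Type*} (a b : V) : edgeGraph a b = edgeGraph b a := by
  unfold edgeGraph; rw [Sym2.eq_swap]

lemma switched_comm {u v x y : V} {G : SimpleGraph V} :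
    switched u v G x y = switched v u G y x := by
  unfold switched
  rw [edgeGraph_comm u v, edgeGraph_comm x y, sup_comm (edgeGraph v u) (edgeGraph y x),
    sup_comm (edgeGraph u x) (edgeGraph v y)]

lemma ncard_insert_diff {α : Type*} {s : Set α} (hfin : s.Finite) {a b : α}
    (ha : a ∈ s) (hb : b ∉ s) : (insert b (s \ {a})).ncard = s.ncard := by
  rw [Set.ncard_insert_of_notMem (fun h => hb h.1) hfin.diff,
    Set.ncard_diff_singleton_of_mem ha,
    Nat.sub_add_cancel (Nat.one_le_iff_ne_zero.mpr (fun h => ?_))]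
  rw [(Set.ncard_eq_zero hfin).mp h] at ha
  exact ha

lemma switched_deg {u v x y : V} {G : SimpleGraph V} {d : V → ℕ}
    (huv : u ≠ v) (hxu : x ≠ u) (hxv : x ≠ v) (hyu : y ≠ u) (hyv : y ≠ v)
    (hxy : x ≠ y) (hGuv : G.Adj u v) (hGxy : G.Adj x y) (hux : ¬G.Adj u x) (hvy : ¬G.Adj v y)
    (hd : ∀ w, (G.neighborSet w).ncard = d w) (w : V) :
    ((switched u v G x y).neighborSet w).ncard = d w := by
  by_cases hwu : w = u
  · subst hwu
    rw [switched_nbr_u huv hxu hxv hyu hyv hxy hGuv hGxy hux hvy,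
      ncard_insert_diff (Set.toFinite _) ((G.mem_neighborSet _ _).mpr hGuv)
        (fun h => hux ((G.mem_neighborSet _ _).mp h)), hd]
  by_cases hwv : w = v
  · subst hwv
    rw [switched_comm, switched_nbr_u huv.symm hyv hyu hxv hxu (Ne.symm hxy) hGuv.symm
      hGxy.symm hvy hux, ncard_insert_diff (Set.toFinite _) ((G.mem_neighborSet _ _).mpr hGuv.symm)
        (fun h => hvy ((G.mem_neighborSet _ _).mp h)), hd]
  by_cases hwx : w = x
  · subst hwx
    rw [switched_nbr_x huv hxu hxv hyu hyv hxy hGuv hGxy hux hvy,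
      ncard_insert_diff (Set.toFinite _) ((G.mem_neighborSet _ _).mpr hGxy)
        (fun h => hux ((G.mem_neighborSet _ _).mp h).symm), hd]
  by_cases hwy : w = y
  · subst hwy
    rw [switched_comm, switched_nbr_x huv.symm hyv hyu hxv hxu (Ne.symm hxy) hGuv.symm
      hGxy.symm hvy hux, ncard_insert_diff (Set.toFinite _) ((G.mem_neighborSet _ _).mpr hGxy.symm)
        (fun h => hvy ((G.mem_neighborSet _ _).mp h).symm), hd]
  · rw [switched_nbr_other huv hxu hxv hyu hyv hxy hGuv hGxy hux hvy hwu hwv hwx hwy, hd]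

lemma disjoint_adj {V : Type*} (G H : SimpleGraph V) :
    Disjoint G H ↔ ∀ ⦃a b : V⦄, G.Adj a b → ¬ H.Adj a b := by
  rw [← SimpleGraph.disjoint_edgeSet, Set.disjoint_left]
  constructor
  · intro h a b hG hH; exact h (G.mem_edgeSet.mpr hG) (H.mem_edgeSet.mpr hH)
  · intro h e heG heH
    induction e using Sym2.inductionOn with
    | hf a b => exact h heG heH

lemma switched_mem {d : V → ℕ} {M G : SimpleGraph V} {u v x y : V}
    (huv : u ≠ v) (hG : G ∈ Gset d (edgeGraph u v) M) (hval : swValid M u v G x y) :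
    switched u v G x y ∈ Gset d ⊥ (M ⊔ edgeGraph u v) ∧
      (switched u v G x y).Adj u x ∧ (switched u v G x y).Adj v y := by
  obtain ⟨hd, hle, hdisj⟩ := hG
  have hGuv : G.Adj u v := (edgeGraph_le huv G).mp hle
  obtain ⟨hGxy, hxu, hxv, hyu, hyv, hxyn, hux, hvy⟩ := swValid_facts huv hGuv hval
  obtain ⟨-, -, -, hMux, -, -, hMvy⟩ := hval
  have hadjux : (switched u v G x y).Adj u x := by
    rw [switched_adj]
    exact Or.inr ⟨Or.inl rfl, fun h => hxu h.symm⟩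
  have hadjvy : (switched u v G x y).Adj v y := by
    rw [switched_adj]
    exact Or.inr ⟨Or.inr rfl, fun h => hyv h.symm⟩
  refine ⟨⟨switched_deg huv hxu hxv hyu hyv hxyn hGuv hGxy hux hvy hd, bot_le, ?_⟩,
    hadjux, hadjvy⟩
  rw [disjoint_adj]
  intro a b hab hMab
  rw [switched_adj] at hab
  rw [sup_adj, edgeGraph_adj] at hMab
  have hMG : ∀ ⦃a b : V⦄, G.Adj a b → ¬ M.Adj a b := (disjoint_adj G M).mp hdisj
  have hMux' : ¬ M.Adj x u := fun h => hMux h.symm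
  have hMvy' : ¬ M.Adj y v := fun h => hMvy h.symm
  simp only [Sym2.eq_iff] at hab hMab
  aesop

open scoped Classical

lemma card_adj_pairs (G : SimpleGraph V) (F : Finset V) :
    ((F ×ˢ (univ : Finset V)).filter (fun p => G.Adj p.1 p.2)).card
      = ∑ x ∈ F, (G.neighborSet x).ncard := by
  have : (F ×ˢ (univ : Finset V)).filter (fun p => G.Adj p.1 p.2)
      = F.biUnion (fun x => {x} ×ˢ (G.neighborSet x).toFinset) := by
    ext p
    simp only [Finset.mem_filter, Finset.mem_product, Finset.mem_biUnion,
      Finset.mem_singleton, Set.mem_toFinset, mem_neighborSet, Finset.mem_univ, true_and,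
      and_true]
    aesop
  rw [this, card_biUnion_sigma]
  exact Finset.sum_congr rfl fun x _ => by rw [Set.ncard_eq_toFinset_card']

lemma card_biUnion_sigma' {α β : Type*} [DecidableEq α] [DecidableEq β]
    (s : Finset α) (f : α → Finset β) :
    (s.biUnion fun a => f a ×ˢ {a}).card = ∑ a ∈ s, (f a).card := by
  rw [Finset.card_biUnion]
  · simp
  · intro x hx y hy hxy
    simp only [Finset.disjoint_left, Finset.mem_product, Finset.mem_singleton]
    rintro p ⟨-, rfl⟩ ⟨-, rfl⟩
    exact hxy rfl

lemma card_adj_pairs' (G : SimpleGraph V) (F : Finset V) :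
    (((univ : Finset V) ×ˢ F).filter (fun p => G.Adj p.1 p.2)).card
      = ∑ y ∈ F, (G.neighborSet y).ncard := by
  have : ((univ : Finset V) ×ˢ F).filter (fun p => G.Adj p.1 p.2)
      = F.biUnion (fun y => (G.neighborSet y).toFinset ×ˢ {y}) := by
    ext p
    simp only [Finset.mem_filter, Finset.mem_product, Finset.mem_biUnion,
      Finset.mem_singleton, Set.mem_toFinset, mem_neighborSet, Finset.mem_univ, true_and]
    constructor
    · rintro ⟨hF, hadj⟩; exact ⟨p.2, hF, hadj.symm, rfl⟩
    · rintro ⟨a, ha, hadj, rfl⟩; exact ⟨ha, hadj.symm⟩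
  rw [this, card_biUnion_sigma']
  exact Finset.sum_congr rfl fun x _ => by rw [Set.ncard_eq_toFinset_card']

lemma forward_count {d : V → ℕ} {M : SimpleGraph V} {u v : V} (huv : u ≠ v)
    {G : SimpleGraph V} (hG : G ∈ Gset d (edgeGraph u v) M) :
    ∑ w, d w ≤
      (((univ : Finset V) ×ˢ (univ : Finset V)).filter
          (fun p => swValid M u v G p.1 p.2)).card
        + (Dsum d (d u + (M.neighborSet u).ncard)
            + Dsum d (d v + (M.neighborSet v).ncard)) := by
  obtain ⟨hd, hle, hdisj⟩ := hG
  have hGuv : G.Adj u v := (edgeGraph_le huv G).mp hle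
  set P := ((univ : Finset V) ×ˢ (univ : Finset V)).filter (fun p => G.Adj p.1 p.2) with hP
  set Tg := ((univ : Finset V) ×ˢ (univ : Finset V)).filter
      (fun p => swValid M u v G p.1 p.2) with hTg
  set Fu := (((G.neighborSet u).toFinset ∪ (M.neighborSet u).toFinset ∪ {u}).erase v) with hFu
  set Fv := (((G.neighborSet v).toFinset ∪ (M.neighborSet v).toFinset ∪ {v}).erase u) with hFv
  set P1 := (Fu ×ˢ (univ : Finset V)).filter (fun p => G.Adj p.1 p.2) with hP1
  set P2 := ((univ : Finset V) ×ˢ Fv).filter (fun p => G.Adj p.1 p.2) with hP2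
  -- P has cardinality ∑ d
  have hPcard : P.card = ∑ w, d w := by
    rw [hP, card_adj_pairs]
    exact Finset.sum_congr rfl fun x _ => hd x
  have hsub : Tg ⊆ P := by
    intro p hp
    rw [hTg, Finset.mem_filter] at hp
    rw [hP, Finset.mem_filter]
    exact ⟨hp.1, hp.2.1⟩
  -- the bad pairs
  have hbadsub : P \ Tg ⊆ P1 ∪ P2 ∪ {(v, u)} := by
    intro p hp
    rw [Finset.mem_sdiff] at hp
    obtain ⟨hpP, hpT⟩ := hp
    rw [hP, Finset.mem_filter] at hpP
    have hadj : G.Adj p.1 p.2 := hpP.2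
    rw [hTg, Finset.mem_filter] at hpT
    have hbad : ¬ swValid M u v G p.1 p.2 := fun h => hpT ⟨hpP.1, h⟩
    unfold swValid at hbad
    push_neg at hbad
    have hbad' : p.1 = u ∨ G.Adj u p.1 ∨ M.Adj u p.1 ∨ p.2 = v ∨ G.Adj v p.2 ∨ M.Adj v p.2 := by
      by_contra hcon
      push_neg at hcon
      exact hcon.2.2.2.2.2
        (hbad hadj hcon.1 hcon.2.1 hcon.2.2.1 hcon.2.2.2.1 hcon.2.2.2.2.1)
    simp only [Finset.mem_union, Finset.mem_singleton]
    have hmemFu : ∀ z : V, z ≠ v → (z = u ∨ G.Adj u z ∨ M.Adj u z) → z ∈ Fu := by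
      intro z hzv hz
      rw [hFu, Finset.mem_erase]
      refine ⟨hzv, ?_⟩
      simp only [Finset.mem_union, Set.mem_toFinset, mem_neighborSet, Finset.mem_singleton]
      tauto
    have hmemFv : ∀ z : V, z ≠ u → (z = v ∨ G.Adj v z ∨ M.Adj v z) → z ∈ Fv := by
      intro z hzu hz
      rw [hFv, Finset.mem_erase]
      refine ⟨hzu, ?_⟩
      simp only [Finset.mem_union, Set.mem_toFinset, mem_neighborSet, Finset.mem_singleton]
      tauto
    have hmP1 : p.1 ∈ Fu → p ∈ P1 := by
      intro h
      rw [hP1, Finset.mem_filter, Finset.mem_product]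
      exact ⟨⟨h, Finset.mem_univ _⟩, hadj⟩
    have hmP2 : p.2 ∈ Fv → p ∈ P2 := by
      intro h
      rw [hP2, Finset.mem_filter, Finset.mem_product]
      exact ⟨⟨Finset.mem_univ _, h⟩, hadj⟩
    rcases hbad' with h | h | h | h | h | h
    · exact Or.inl (Or.inl (hmP1 (hmemFu _ (by rintro rfl; exact huv h.symm) (Or.inl h))))
    -- x-side bad cases: G.Adj u p.1 or M.Adj u p.1
    · by_cases hxv : p.1 = v
      · -- p.1 = v ; look at p.2
        by_cases hyu : p.2 = u
        · refine Or.inr ?_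
          rw [← hxv, ← hyu]
        · refine Or.inl (Or.inr (hmP2 (hmemFv _ hyu (Or.inr (Or.inl ?_)))))
          rw [← hxv]; exact hadj
      · exact Or.inl (Or.inl (hmP1 (hmemFu _ hxv (Or.inr (Or.inl h)))))
    · by_cases hxv : p.1 = v
      · by_cases hyu : p.2 = u
        · refine Or.inr ?_
          rw [← hxv, ← hyu]
        · refine Or.inl (Or.inr (hmP2 (hmemFv _ hyu (Or.inr (Or.inl ?_)))))
          rw [← hxv]; exact hadj
      · exact Or.inl (Or.inl (hmP1 (hmemFu _ hxv (Or.inr (Or.inr h)))))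
    · exact Or.inl (Or.inr (hmP2 (hmemFv _ (by rintro rfl; exact huv h) (Or.inl h))))
    · by_cases hyu : p.2 = u
      · by_cases hxv : p.1 = v
        · refine Or.inr ?_
          rw [← hxv, ← hyu]
        · refine Or.inl (Or.inl (hmP1 (hmemFu _ hxv (Or.inr (Or.inl ?_)))))
          rw [← hyu]; exact hadj.symm
      · exact Or.inl (Or.inr (hmP2 (hmemFv _ hyu (Or.inr (Or.inl h)))))
    · by_cases hyu : p.2 = u
      · by_cases hxv : p.1 = v
        · refine Or.inr ?_
          rw [← hxv, ← hyu]
        · refine Or.inl (Or.inl (hmP1 (hmemFu _ hxv (Or.inr (Or.inl ?_)))))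
          rw [← hyu]; exact hadj.symm
      · exact Or.inl (Or.inr (hmP2 (hmemFv _ hyu (Or.inr (Or.inr h)))))
  -- cardinality bounds
  have hFucard : Fu.card ≤ d u + (M.neighborSet u).ncard := by
    have hv : v ∈ (G.neighborSet u).toFinset ∪ (M.neighborSet u).toFinset ∪ {u} := by
      simp only [Finset.mem_union, Set.mem_toFinset, mem_neighborSet]
      exact Or.inl (Or.inl hGuv)
    rw [hFu, Finset.card_erase_of_mem hv]
    have : ((G.neighborSet u).toFinset ∪ (M.neighborSet u).toFinset ∪ {u}).card
        ≤ d u + (M.neighborSet u).ncard + 1 := by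
      calc ((G.neighborSet u).toFinset ∪ (M.neighborSet u).toFinset ∪ {u}).card
          ≤ ((G.neighborSet u).toFinset ∪ (M.neighborSet u).toFinset).card + ({u} : Finset V).card :=
            Finset.card_union_le _ _
        _ ≤ (G.neighborSet u).toFinset.card + (M.neighborSet u).toFinset.card + 1 := by
            have := Finset.card_union_le (G.neighborSet u).toFinset (M.neighborSet u).toFinset
            simp only [Finset.card_singleton]
            omega
        _ = d u + (M.neighborSet u).ncard + 1 := by
            rw [← Set.ncard_eq_toFinset_card', ← Set.ncard_eq_toFinset_card', hd]
    omega
  have hFvcard : Fv.card ≤ d v + (M.neighborSet v).ncard := by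
    have hu : u ∈ (G.neighborSet v).toFinset ∪ (M.neighborSet v).toFinset ∪ {v} := by
      simp only [Finset.mem_union, Set.mem_toFinset, mem_neighborSet]
      exact Or.inl (Or.inl hGuv.symm)
    rw [hFv, Finset.card_erase_of_mem hu]
    have : ((G.neighborSet v).toFinset ∪ (M.neighborSet v).toFinset ∪ {v}).card
        ≤ d v + (M.neighborSet v).ncard + 1 := by
      calc ((G.neighborSet v).toFinset ∪ (M.neighborSet v).toFinset ∪ {v}).card
          ≤ ((G.neighborSet v).toFinset ∪ (M.neighborSet v).toFinset).card + ({v} : Finset V).card :=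
            Finset.card_union_le _ _
        _ ≤ (G.neighborSet v).toFinset.card + (M.neighborSet v).toFinset.card + 1 := by
            have := Finset.card_union_le (G.neighborSet v).toFinset (M.neighborSet v).toFinset
            simp only [Finset.card_singleton]
            omega
        _ = d v + (M.neighborSet v).ncard + 1 := by
            rw [← Set.ncard_eq_toFinset_card', ← Set.ncard_eq_toFinset_card', hd]
    omega
  have hP1card : P1.card ≤ Dsum d (d u + (M.neighborSet u).ncard) := by
    rw [hP1, card_adj_pairs]
    calc ∑ x ∈ Fu, (G.neighborSet x).ncard = ∑ x ∈ Fu, d x :=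
          Finset.sum_congr rfl fun x _ => hd x
      _ ≤ _ := sum_le_Dsum d hFucard
  have hP2card : P2.card ≤ Dsum d (d v + (M.neighborSet v).ncard) := by
    rw [hP2, card_adj_pairs']
    calc ∑ x ∈ Fv, (G.neighborSet x).ncard = ∑ x ∈ Fv, d x :=
          Finset.sum_congr rfl fun x _ => hd x
      _ ≤ _ := sum_le_Dsum d hFvcard
  have hinter : (u, v) ∈ P1 ∩ P2 := by
    rw [Finset.mem_inter, hP1, hP2, Finset.mem_filter, Finset.mem_filter,
      Finset.mem_product, Finset.mem_product]
    have hu : u ∈ Fu := by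
      rw [hFu, Finset.mem_erase]
      exact ⟨huv, by simp⟩
    have hv : v ∈ Fv := by
      rw [hFv, Finset.mem_erase]
      exact ⟨huv.symm, by simp⟩
    exact ⟨⟨⟨hu, Finset.mem_univ _⟩, hGuv⟩, ⟨⟨Finset.mem_univ _, hv⟩, hGuv⟩⟩
  have h12 : (P1 ∪ P2).card + 1 ≤ P1.card + P2.card := by
    have h := Finset.card_union_add_card_inter P1 P2
    have : 0 < (P1 ∩ P2).card := Finset.card_pos.mpr ⟨_, hinter⟩
    omega
  have hbadcard : (P \ Tg).card ≤ Dsum d (d u + (M.neighborSet u).ncard)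
      + Dsum d (d v + (M.neighborSet v).ncard) := by
    calc (P \ Tg).card ≤ (P1 ∪ P2 ∪ {(v, u)}).card := Finset.card_le_card hbadsub
      _ ≤ (P1 ∪ P2).card + ({(v, u)} : Finset (V × V)).card := Finset.card_union_le _ _
      _ = (P1 ∪ P2).card + 1 := by rw [Finset.card_singleton]
      _ ≤ P1.card + P2.card := h12
      _ ≤ _ := Nat.add_le_add hP1card hP2card
  have hsplit : (P \ Tg).card + Tg.card = P.card := Finset.card_sdiff_add_card_eq_card hsub
  omega

set_option maxHeartbeats 1000000 in
lemma main_count (d : V → ℕ) (M : SimpleGraph V) (u v : V) (huv : u ≠ v) :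
    (Gset d (edgeGraph u v) M).toFinset.card * (∑ w, d w)
      ≤ (Gset d ⊥ (M ⊔ edgeGraph u v)).toFinset.card * (d u * d v)
        + (Gset d (edgeGraph u v) M).toFinset.card
            * (Dsum d (d u + (M.neighborSet u).ncard)
                + Dsum d (d v + (M.neighborSet v).ncard)) := by
  set Afin := (Gset d (edgeGraph u v) M).toFinset with hAfin
  set Bfin := (Gset d ⊥ (M ⊔ edgeGraph u v)).toFinset with hBfin
  set Du := Dsum d (d u + (M.neighborSet u).ncard)
  set Dv := Dsum d (d v + (M.neighborSet v).ncard)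
  set pairs := fun G : SimpleGraph V =>
    ((univ : Finset V) ×ˢ (univ : Finset V)).filter (fun p => swValid M u v G p.1 p.2)
    with hpairs
  set T := Afin.biUnion (fun G => {G} ×ˢ pairs G) with hT
  set B' := Bfin.biUnion
      (fun H => {H} ×ˢ ((H.neighborSet u).toFinset ×ˢ (H.neighborSet v).toFinset)) with hB'
  -- lower bound on T
  have hTcard : T.card = ∑ G ∈ Afin, (pairs G).card := card_biUnion_sigma _ _
  have hlow : Afin.card * (∑ w, d w) ≤ T.card + Afin.card * (Du + Dv) := by
    rw [hTcard]
    calc Afin.card * (∑ w, d w) = ∑ _G ∈ Afin, (∑ w, d w) := by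
          rw [Finset.sum_const, smul_eq_mul]
      _ ≤ ∑ G ∈ Afin, ((pairs G).card + (Du + Dv)) := by
          apply Finset.sum_le_sum
          intro G hGmem
          exact forward_count huv (Set.mem_toFinset.mp hGmem)
      _ = (∑ G ∈ Afin, (pairs G).card) + Afin.card * (Du + Dv) := by
          rw [Finset.sum_add_distrib, Finset.sum_const, smul_eq_mul]
  -- upper bound on T via injection
  have hup : T.card ≤ B'.card := by
    apply Finset.card_le_card_of_injOn
      (fun q => (switched u v q.1 q.2.1 q.2.2, q.2))
    · intro q hq
      rw [hT, Finset.mem_coe, Finset.mem_biUnion] at hq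
      obtain ⟨G, hGA, hqmem⟩ := hq
      rw [Finset.mem_product, Finset.mem_singleton] at hqmem
      obtain ⟨hq1, hq2⟩ := hqmem
      rw [hpairs, Finset.mem_filter] at hq2
      have hval : swValid M u v G q.2.1 q.2.2 := hq2.2
      have hGmem : G ∈ Gset d (edgeGraph u v) M := Set.mem_toFinset.mp hGA
      obtain ⟨hmem, hadjux, hadjvy⟩ := switched_mem huv hGmem hval
      rw [hB', Finset.mem_coe, Finset.mem_biUnion]
      refine ⟨switched u v G q.2.1 q.2.2, Set.mem_toFinset.mpr hmem, ?_⟩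
      rw [Finset.mem_product, Finset.mem_product]
      subst hq1
      exact ⟨Finset.mem_singleton_self _,
        Set.mem_toFinset.mpr hadjux, Set.mem_toFinset.mpr hadjvy⟩
    · intro q1 hq1 q2 hq2 heq
      simp only [Prod.mk.injEq] at heq
      obtain ⟨heq1, heq2⟩ := heq
      rw [Finset.mem_coe, hT, Finset.mem_biUnion] at hq1 hq2
      obtain ⟨G1, hG1A, hg1⟩ := hq1
      obtain ⟨G2, hG2A, hg2⟩ := hq2
      rw [Finset.mem_product, Finset.mem_singleton] at hg1 hg2
      obtain ⟨he1, hp1⟩ := hg1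
      obtain ⟨he2, hp2⟩ := hg2
      rw [hpairs, Finset.mem_filter] at hp1 hp2
      rw [← he1] at hG1A hp1
      rw [← he2] at hG2A hp2
      rw [heq2] at heq1
      rw [hAfin, Set.mem_toFinset] at hG1A hG2A
      have hG1 : q1.1 ∈ Gset d (edgeGraph u v) M := hG1A
      have hG2 : q2.1 ∈ Gset d (edgeGraph u v) M := hG2A
      have hGuv1 : q1.1.Adj u v := (edgeGraph_le huv _).mp hG1.2.1
      have hGuv2 : q2.1.Adj u v := (edgeGraph_le huv _).mp hG2.2.1
      have hval1 : swValid M u v q1.1 q2.2.1 q2.2.2 := heq2 ▸ hp1.2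
      have := switched_injective huv hGuv1 hval1 hGuv2 hp2.2 heq1
      exact Prod.ext this heq2
  -- cardinality of B'
  have hBcard : B'.card = Bfin.card * (d u * d v) := by
    rw [hB', card_biUnion_sigma]
    rw [Finset.sum_congr rfl (fun H hH => ?_), Finset.sum_const, smul_eq_mul]
    have hmem : H ∈ Gset d ⊥ (M ⊔ edgeGraph u v) := Set.mem_toFinset.mp hH
    rw [Finset.card_product, ← Set.ncard_eq_toFinset_card', ← Set.ncard_eq_toFinset_card',
      hmem.1 u, hmem.1 v]
  calc Afin.card * (∑ w, d w) ≤ T.card + Afin.card * (Du + Dv) := hlow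
    _ ≤ B'.card + Afin.card * (Du + Dv) := Nat.add_le_add_right hup _
    _ = Bfin.card * (d u * d v) + Afin.card * (Du + Dv) := by rw [hBcard]

end Switch

theorem two_switch_ratio_upper {V : Type*} [Fintype V] [DecidableEq V] (d : V → ℕ)
    (M : SimpleGraph V) (u v : V) (huv : u ≠ v) (hMuv : ¬ M.Adj u v)
    (h1 : (Gset d (edgeGraph u v) M).Nonempty)
    (h2 : (Gset d ⊥ (M ⊔ edgeGraph u v)).Nonempty)
    (hf : 0 < 1 - ((Dsum d (d u + (M.neighborSet u).ncard) : ℝ)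
            + (Dsum d (d v + (M.neighborSet v).ncard) : ℝ)) / (∑ w, (d w : ℝ))) :
    ((Gset d (edgeGraph u v) M).ncard : ℝ) / ((Gset d ⊥ (M ⊔ edgeGraph u v)).ncard : ℝ)
      ≤ ((d u : ℝ) * (d v : ℝ) / (∑ w, (d w : ℝ)))
          * (1 / (1 - ((Dsum d (d u + (M.neighborSet u).ncard) : ℝ)
              + (Dsum d (d v + (M.neighborSet v).ncard) : ℝ)) / (∑ w, (d w : ℝ)))) := by
  classical
  set S : ℕ := ∑ w, d w with hS
  set Du : ℕ := Dsum d (d u + (M.neighborSet u).ncard) with hDu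
  set Dv : ℕ := Dsum d (d v + (M.neighborSet v).ncard) with hDv
  set a : ℕ := (Gset d (edgeGraph u v) M).ncard with ha
  set b : ℕ := (Gset d ⊥ (M ⊔ edgeGraph u v)).ncard with hb
  have haf : a = (Gset d (edgeGraph u v) M).toFinset.card := Set.ncard_eq_toFinset_card' _
  have hbf : b = (Gset d ⊥ (M ⊔ edgeGraph u v)).toFinset.card := Set.ncard_eq_toFinset_card' _
  have hmain : a * S ≤ b * (d u * d v) + a * (Du + Dv) := by
    rw [haf, hbf]; exact main_count d M u v huv
  have hbpos : 0 < b := (Set.ncard_pos (Set.toFinite _)).mpr h2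
  have hSpos : 0 < S := by
    obtain ⟨G0, hG0⟩ := h1
    have hGuv : G0.Adj u v := (edgeGraph_le huv G0).mp hG0.2.1
    have hdu : 0 < d u := by
      rw [← hG0.1 u]
      exact (Set.ncard_pos (Set.toFinite _)).mpr ⟨v, hGuv⟩
    calc 0 < d u := hdu
      _ ≤ S := Finset.single_le_sum (fun w _ => Nat.zero_le (d w)) (Finset.mem_univ u)
  -- real versions
  have hSr : (∑ w, (d w : ℝ)) = (S : ℝ) := by rw [hS]; push_cast; rfl
  rw [hSr] at hf ⊢
  have hSrpos : (0:ℝ) < (S:ℝ) := by exact_mod_cast hSpos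
  have hq : ((Du:ℝ) + (Dv:ℝ)) / (S:ℝ) < 1 := by linarith
  have hDS : (Du:ℝ) + (Dv:ℝ) < (S:ℝ) := (div_lt_one hSrpos).mp hq
  have hbr : (0:ℝ) < (b:ℝ) := by exact_mod_cast hbpos
  have hdenpos : (0:ℝ) < (S:ℝ) - ((Du:ℝ) + (Dv:ℝ)) := by linarith
  have hrhs : ((d u : ℝ) * (d v : ℝ) / (S:ℝ))
      * (1 / (1 - ((Du:ℝ) + (Dv:ℝ)) / (S:ℝ)))
      = (d u : ℝ) * (d v : ℝ) / ((S:ℝ) - ((Du:ℝ) + (Dv:ℝ))) := by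
    rw [div_mul_div_comm, mul_one]
    congr 1
    field_simp
  rw [hrhs, div_le_div_iff₀ hbr hdenpos]
  have hmainR : (a:ℝ) * (S:ℝ) ≤ (b:ℝ) * ((d u : ℝ) * (d v : ℝ)) + (a:ℝ) * ((Du:ℝ) + (Dv:ℝ)) := by
    exact_mod_cast hmain
  nlinarith [Nat.cast_nonneg (α := ℝ) a]
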